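/- For even k with 2 ≤ k ≤ n, from any n unit vectors in ℝ² one can select k of them with corresponding signs ε_1, ..., ε_k ∈ {±1} (vectors chosen with distinct indices) such that the signed sum has Euclidean norm at least k·cos((k−1)π/(2n)). -/

import Mathlib

open Finset

lemma decomp17 (z : ℂ) (hz : ‖z‖ = 1) :
    ∃ θ s : ℝ, 0 ≤ θ ∧ θ < Real.pi ∧ (s = 1 ∨ s = -1) ∧
      z = s • Complex.exp (θ * Complex.I) := by
  have ha : z = Complex.exp (z.arg * Complex.I) := by
    conv_lhs => rw [← Complex.norm_mul_exp_arg_mul_I z]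
    rw [show ‖z‖ = 1 from hz]
    simp
  have h1 : -Real.pi < z.arg := Complex.neg_pi_lt_arg z
  have h2 : z.arg ≤ Real.pi := Complex.arg_le_pi z
  by_cases hc : 0 ≤ z.arg ∧ z.arg < Real.pi
  · exact ⟨z.arg, 1, hc.1, hc.2, Or.inl rfl, by rw [one_smul]; exact ha⟩
  by_cases hpi : z.arg = Real.pi
  · refine ⟨0, -1, le_refl _, Real.pi_pos, Or.inr rfl, ?_⟩
    rw [ha, hpi, Complex.exp_pi_mul_I]
    norm_num
  · have hneg : z.arg < 0 := by
      rcases lt_or_ge z.arg 0 with h | h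
      · exact h
      · exact absurd ⟨h, lt_of_le_of_ne h2 hpi⟩ hc
    refine ⟨z.arg + Real.pi, -1, by linarith, by linarith, Or.inr rfl, ?_⟩
    conv_lhs => rw [ha]
    push_cast
    rw [add_mul, Complex.exp_add, Complex.exp_pi_mul_I]
    simp

lemma arc_sum17 {k : ℕ} (x : Fin k → ℝ) (m L : ℝ) (hL : L ≤ Real.pi)
    (hx : ∀ i, |x i - m| ≤ L) :
    (k : ℝ) * Real.cos L ≤ ‖∑ i, Complex.exp (x i * Complex.I)‖ := by
  have key : Complex.exp (-(m : ℂ) * Complex.I) * ∑ i, Complex.exp ((x i : ℂ) * Complex.I)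
      = ∑ i, Complex.exp (((x i - m : ℝ) : ℂ) * Complex.I) := by
    rw [Finset.mul_sum]
    refine Finset.sum_congr rfl fun i _ => ?_
    rw [← Complex.exp_add]
    congr 1
    push_cast
    ring
  have hnorm : ‖∑ i, Complex.exp ((x i : ℂ) * Complex.I)‖
      = ‖∑ i, Complex.exp (((x i - m : ℝ) : ℂ) * Complex.I)‖ := by
    rw [← key, norm_mul]
    have : ‖Complex.exp (-(m : ℂ) * Complex.I)‖ = 1 := by
      rw [show (-(m:ℂ)) = ((-m : ℝ) : ℂ) by push_cast; ring,
        Complex.norm_exp_ofReal_mul_I]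
    rw [this, one_mul]
  rw [hnorm]
  have hre : (∑ i, Complex.exp (((x i - m : ℝ) : ℂ) * Complex.I)).re
      = ∑ i, Real.cos (x i - m) := by
    rw [Complex.re_sum]
    exact Finset.sum_congr rfl fun i _ => Complex.exp_ofReal_mul_I_re _
  calc (k : ℝ) * Real.cos L = ∑ _i : Fin k, Real.cos L := by
        rw [Finset.sum_const, Finset.card_univ, Fintype.card_fin, nsmul_eq_mul]
    _ ≤ ∑ i, Real.cos (x i - m) := by
        refine Finset.sum_le_sum fun i _ => ?_
        have := Real.cos_le_cos_of_nonneg_of_le_pi (abs_nonneg (x i - m)) hL (hx i)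
        rwa [Real.cos_abs] at this
    _ = (∑ i, Complex.exp (((x i - m : ℝ) : ℂ) * Complex.I)).re := hre.symm
    _ ≤ ‖∑ i, Complex.exp (((x i - m : ℝ) : ℂ) * Complex.I)‖ := by
        exact Complex.re_le_norm _

lemma telescope17 (φ : ℕ → ℝ) (n d : ℕ) (hd : d ≤ n)
    (hper : ∀ j, φ (j + n) = φ j + Real.pi) :
    ∑ j ∈ Finset.range n, (φ (j + d) - φ j) = d * Real.pi := by
  rw [Finset.sum_sub_distrib]
  have h1 : ∑ j ∈ Finset.range n, φ (j + d) = ∑ j ∈ Finset.Ico d (n + d), φ j := by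
    rw [Finset.sum_Ico_eq_sum_range]
    simp [add_comm, Nat.add_sub_cancel]
  have h2 : ∑ j ∈ Finset.Ico d (n + d), φ j
      = ∑ j ∈ Finset.Ico d n, φ j + ∑ j ∈ Finset.Ico n (n + d), φ j :=
    (Finset.sum_Ico_consecutive _ hd (Nat.le_add_right n d)).symm
  have h3 : ∑ j ∈ Finset.range n, φ j
      = ∑ j ∈ Finset.Ico 0 d, φ j + ∑ j ∈ Finset.Ico d n, φ j := by
    rw [Finset.range_eq_Ico]
    exact (Finset.sum_Ico_consecutive _ (Nat.zero_le d) hd).symm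
  rw [h1, h2, h3]
  have h4 : ∑ j ∈ Finset.Ico n (n + d), φ j = ∑ j ∈ Finset.range d, φ (j + n) := by
    rw [Finset.sum_Ico_eq_sum_range]
    simp [add_comm, Nat.add_sub_cancel_left]
  have h5 : ∑ j ∈ Finset.Ico 0 d, φ j = ∑ j ∈ Finset.range d, φ j := by
    rw [Finset.range_eq_Ico]
  rw [h4, h5]
  have : ∑ j ∈ Finset.range d, φ (j + n) = ∑ j ∈ Finset.range d, (φ j + Real.pi) :=
    Finset.sum_congr rfl fun j _ => hper j
  rw [this, Finset.sum_add_distrib, Finset.sum_const, Finset.card_range, nsmul_eq_mul]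
  ring

theorem stmt_17 (n k : ℕ) (hk : Even k) (hk2 : 2 ≤ k) (hkn : k ≤ n)
    (u : Fin n → ℂ) (hu : ∀ i, ‖u i‖ = 1) :
    ∃ (s : Fin k → Fin n) (ε : Fin k → ℝ),
      Function.Injective s ∧ (∀ i, ε i = 1 ∨ ε i = -1) ∧
      ‖∑ i, ε i • u (s i)‖ ≥ k * Real.cos (((k : ℝ) - 1) * Real.pi / (2 * n)) := by
  clear hk
  have hn : 0 < n := lt_of_lt_of_le (by omega) hkn
  choose θ sgn h0 hπ hsgn hdec using fun i => decomp17 (u i) (hu i)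
  set σ := Tuple.sort θ with hσ
  have hgmono : Monotone (θ ∘ σ) := Tuple.monotone_sort θ
  set g : Fin n → ℝ := θ ∘ σ with hg
  set d := k - 1 with hd
  have hdn : d ≤ n := by omega
  set φ : ℕ → ℝ := fun j => g ⟨j % n, Nat.mod_lt j hn⟩ + Real.pi * ((j / n : ℕ) : ℝ) with hφ
  have hper : ∀ j, φ (j + n) = φ j + Real.pi := by
    intro j
    simp only [hφ, Nat.add_mod_right, Nat.add_div_right j hn]
    push_cast
    ring
  have hmono : Monotone φ := by
    refine monotone_nat_of_le_succ fun j => ?_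
    by_cases hc : j % n + 1 = n
    · have hj1 : j + 1 = n * (j / n + 1) := by
        have h := Nat.mod_add_div j n
        rw [Nat.mul_add, Nat.mul_one]
        omega
      have hmod : (j + 1) % n = 0 := by rw [hj1]; exact Nat.mul_mod_right _ _
      have hdiv : (j + 1) / n = j / n + 1 := by
        rw [hj1, Nat.mul_div_cancel_left _ hn]
      simp only [hφ, hmod, hdiv]
      have hπj : g ⟨j % n, Nat.mod_lt j hn⟩ < Real.pi := hπ _
      have h0j : (0:ℝ) ≤ g ⟨0, hn⟩ := h0 _
      push_cast
      linarith
    · have hlt : j % n + 1 < n := lt_of_le_of_ne (Nat.mod_lt j hn) hc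
      have hj1 : j + 1 = n * (j / n) + (j % n + 1) := by
        have := Nat.mod_add_div j n
        omega
      have hmod : (j + 1) % n = j % n + 1 := by
        rw [hj1, Nat.mul_add_mod, Nat.mod_eq_of_lt hlt]
      have hdiv : (j + 1) / n = j / n := by
        rw [hj1, Nat.mul_add_div hn, Nat.div_eq_of_lt hlt, Nat.add_zero]
      simp only [hφ, hmod, hdiv]
      have := hgmono (show (⟨j % n, Nat.mod_lt j hn⟩ : Fin n) ≤ ⟨j % n + 1, hlt⟩ by
        simp [Fin.le_def])
      simp only [hg] at this ⊢
      linarith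
  -- pigeonhole
  have hsum := telescope17 φ n d hdn hper
  have hpig : ∃ j0 ∈ Finset.range n, φ (j0 + d) - φ j0 ≤ d * Real.pi / n := by
    by_contra h
    push_neg at h
    have hlt : ∑ j ∈ Finset.range n, ((d:ℝ) * Real.pi / n)
        < ∑ j ∈ Finset.range n, (φ (j + d) - φ j) :=
      Finset.sum_lt_sum_of_nonempty ⟨0, Finset.mem_range.2 hn⟩ h
    rw [hsum, Finset.sum_const, Finset.card_range, nsmul_eq_mul] at hlt
    have hne : (n:ℝ) ≠ 0 := Nat.cast_ne_zero.mpr hn.ne'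
    rw [show (n:ℝ) * ((d:ℝ) * Real.pi / (n:ℝ)) = (d:ℝ) * Real.pi by field_simp] at hlt
    exact lt_irrefl _ hlt
  obtain ⟨j0, hj0m, hspan⟩ := hpig
  rw [Finset.mem_range] at hj0m
  set s : Fin k → Fin n := fun i => σ ⟨(j0 + (i:ℕ)) % n, Nat.mod_lt _ hn⟩ with hs
  set ε : Fin k → ℝ := fun i => (if j0 + (i:ℕ) < n then 1 else -1) * sgn (s i) with hε
  have hεpm : ∀ i, ε i = 1 ∨ ε i = -1 := by
    intro i
    rcases hsgn (s i) with h | h <;> simp only [hε, h] <;>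
      by_cases hc : j0 + (i:ℕ) < n <;> simp [hc]
  have hinj : Function.Injective s := by
    intro i i' hii
    have h1 : (⟨(j0 + (i:ℕ)) % n, Nat.mod_lt _ hn⟩ : Fin n)
        = ⟨(j0 + (i':ℕ)) % n, Nat.mod_lt _ hn⟩ := σ.injective hii
    have h2 : (j0 + (i:ℕ)) % n = (j0 + (i':ℕ)) % n := by
      exact congrArg Fin.val h1
    have h3 : (i:ℕ) % n = (i':ℕ) % n := Nat.ModEq.add_left_cancel' j0 h2
    have h4 : (i:ℕ) = (i':ℕ) := by
      rwa [Nat.mod_eq_of_lt (lt_of_lt_of_le i.isLt hkn),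
        Nat.mod_eq_of_lt (lt_of_lt_of_le i'.isLt hkn)] at h3
    exact Fin.ext h4
  have hvec : ∀ i : Fin k, ε i • u (s i) = Complex.exp ((φ (j0 + (i:ℕ)) : ℝ) * Complex.I) := by
    intro i
    have hsg : sgn (s i) • u (s i) = Complex.exp ((θ (s i) : ℝ) * Complex.I) := by
      rw [hdec (s i), smul_smul]
      rcases hsgn (s i) with h | h <;> rw [h] <;> norm_num
    have hθg : θ (s i) = g ⟨(j0 + (i:ℕ)) % n, Nat.mod_lt _ hn⟩ := rfl
    have hstep : ε i • u (s i)
        = (if j0 + (i:ℕ) < n then (1:ℝ) else -1) • Complex.exp ((θ (s i) : ℝ) * Complex.I) := by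
      rw [← hsg, smul_smul]
    by_cases hc : j0 + (i:ℕ) < n
    · have hdiv : (j0 + (i:ℕ)) / n = 0 := Nat.div_eq_of_lt hc
      rw [hstep, if_pos hc, one_smul]
      congr 1
      rw [hθg]
      simp only [hφ, hdiv]
      push_cast
      ring
    · have hlt2 : j0 + (i:ℕ) < 2 * n := by
        have := i.isLt
        omega
      have hdiv : (j0 + (i:ℕ)) / n = 1 := by
        rw [Nat.div_eq_sub_div hn (le_of_not_gt hc), Nat.div_eq_of_lt (by omega)]
      rw [hstep, if_neg hc]
      have hφval : φ (j0 + (i:ℕ)) = θ (s i) + Real.pi := by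
        simp only [hφ, hdiv, hθg]
        push_cast
        ring
      rw [hφval]
      push_cast
      rw [add_mul, Complex.exp_add, Complex.exp_pi_mul_I]
      simp
  refine ⟨s, ε, hinj, hεpm, ?_⟩
  have hsumeq : ∑ i, ε i • u (s i) = ∑ i : Fin k, Complex.exp ((φ (j0 + (i:ℕ)) : ℝ) * Complex.I) :=
    Finset.sum_congr rfl fun i _ => hvec i
  rw [ge_iff_le, hsumeq]
  set L : ℝ := ((k : ℝ) - 1) * Real.pi / (2 * n) with hL
  have hnR : (0:ℝ) < n := by exact_mod_cast hn
  have hne : (n:ℝ) ≠ 0 := ne_of_gt hnR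
  have hdcast : (d : ℝ) = (k : ℝ) - 1 := by
    rw [hd, Nat.cast_sub (by omega : 1 ≤ k), Nat.cast_one]
  have hLpi : L ≤ Real.pi := by
    rw [hL, div_le_iff₀ (by positivity)]
    have hkR : (k:ℝ) ≤ n := by exact_mod_cast hkn
    have := mul_le_mul_of_nonneg_right (show (k:ℝ) - 1 ≤ 2 * (n:ℝ) by linarith)
      Real.pi_pos.le
    linarith
  refine arc_sum17 _ (φ j0 + L) L hLpi fun i => ?_
  have hle1 : φ j0 ≤ φ (j0 + (i:ℕ)) := hmono (Nat.le_add_right _ _)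
  have hle2 : φ (j0 + (i:ℕ)) ≤ φ (j0 + d) := hmono (by omega)
  have hspan2 : φ (j0 + d) - φ j0 ≤ 2 * L := by
    rw [hL]
    have heq : (d:ℝ) * Real.pi / (n:ℝ) = 2 * (((k:ℝ)-1) * Real.pi / (2*(n:ℝ))) := by
      rw [hdcast]
      field_simp
    linarith [hspan]
  rw [abs_le]
  constructor <;> [skip; skip] <;> linarith [hspan2, hle1, hle2]
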